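/- Let p ≠ q be primes and n, m positive integers with n ≡ 1 or 5 (mod 6) and m ≡ 1, 3, or 5 (mod 6). Then the number of triples (A,B,C) of positive integers with A ≤ B ≤ C and A·B·C = p^n·q^m equals (n+1)(m+1)(nm+2n+2m+7)/24. -/

import Mathlib

open Finset

def A3 (k : ℕ) : Finset (ℕ × ℕ × ℕ) :=
  ((range (k+1)) ×ˢ (range (k+1)) ×ˢ (range (k+1))).filter
    (fun t => t.1 + t.2.1 + t.2.2 = k)

lemma mem_A3 {k : ℕ} {t : ℕ × ℕ × ℕ} : t ∈ A3 k ↔ t.1 + t.2.1 + t.2.2 = k := by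
  simp only [A3, mem_filter, mem_product, mem_range]
  omega

lemma gauss (n : ℕ) : ∑ a ∈ range n, (a + 1) * 2 = n * (n + 1) := by
  induction n with
  | zero => simp
  | succ k ih => rw [Finset.sum_range_succ, ih]; ring

lemma A3_card (k : ℕ) : (A3 k).card * 2 = (k + 1) * (k + 2) := by
  have h1 : (A3 k).card = ∑ a ∈ range (k+1), ((A3 k).filter (fun t => t.1 = a)).card := by
    apply card_eq_sum_card_fiberwise
    intro t ht
    rw [Finset.mem_coe, mem_A3] at ht
    simp only [Finset.mem_coe, mem_range]; omega
  have h2 : ∀ a ∈ range (k+1), ((A3 k).filter (fun t => t.1 = a)).card = k - a + 1 := by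
    intro a ha
    rw [mem_range] at ha
    rw [← Finset.Nat.card_antidiagonal (k - a)]
    apply card_bij (fun t _ => t.2)
    · intro t ht
      simp only [mem_filter, mem_A3] at ht
      rw [Finset.HasAntidiagonal.mem_antidiagonal]
      omega
    · intro t1 h1 t2 h2 he
      simp only [mem_filter, mem_A3] at h1 h2
      exact Prod.ext (h1.2.trans h2.2.symm) he
    · intro b hb
      rw [Finset.HasAntidiagonal.mem_antidiagonal] at hb
      obtain ⟨b1, b2⟩ := b
      refine ⟨(a, b1, b2), ?_, rfl⟩
      rw [mem_filter, mem_A3]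
      exact ⟨show a + b1 + b2 = k by omega, rfl⟩
  rw [h1, Finset.sum_congr rfl h2, Finset.sum_mul]
  rw [← Finset.sum_range_reflect]
  have he : ∀ a ∈ range (k+1), (k - (k + 1 - 1 - a) + 1) * 2 = (a + 1) * 2 := by
    intro a ha; rw [mem_range] at ha; omega
  rw [Finset.sum_congr rfl he]
  exact gauss (k+1)

def T3 (N : ℕ) : Finset (ℕ × ℕ × ℕ) :=
  (N.divisors ×ˢ N.divisors ×ˢ N.divisors).filter
    (fun t => t.1 * t.2.1 * t.2.2 = N)

lemma mem_T3 {N : ℕ} (hN : N ≠ 0) {t : ℕ × ℕ × ℕ} :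
    t ∈ T3 N ↔ t.1 * t.2.1 * t.2.2 = N := by
  simp only [T3, mem_filter, mem_product, Nat.mem_divisors]
  constructor
  · tauto
  · intro h
    refine ⟨⟨⟨⟨t.2.1 * t.2.2, by rw [← h]; ring⟩, hN⟩, ⟨⟨t.1 * t.2.2, by rw [← h]; ring⟩, hN⟩,
      ⟨⟨t.1 * t.2.1, by rw [← h]; ring⟩, hN⟩⟩, h⟩

lemma ppow_inj {p q : ℕ} (hp : p.Prime) (hq : q.Prime) (hpq : p ≠ q)
    {i j k l : ℕ} (h : p ^ i * q ^ j = p ^ k * q ^ l) : i = k ∧ j = l := by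
  have hP : ∀ a b : ℕ, ((p ^ a * q ^ b).factorization) p = a := by
    intro a b
    rw [Nat.factorization_mul (pow_ne_zero _ hp.pos.ne') (pow_ne_zero _ hq.pos.ne'),
      hp.factorization_pow, hq.factorization_pow]
    simp [Finsupp.single_apply, hpq.symm]
  have hQ : ∀ a b : ℕ, ((p ^ a * q ^ b).factorization) q = b := by
    intro a b
    rw [Nat.factorization_mul (pow_ne_zero _ hp.pos.ne') (pow_ne_zero _ hq.pos.ne'),
      hp.factorization_pow, hq.factorization_pow]
    simp [Finsupp.single_apply, hpq]
  constructor
  · have := hP i j; rw [h, hP] at this; exact this.symm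
  · have := hQ i j; rw [h, hQ] at this; exact this.symm

lemma dvd_shape {p q n m : ℕ} (hp : p.Prime) (hq : q.Prime) (hpq : p ≠ q)
    {A : ℕ} (hA : A ∣ p ^ n * q ^ m) : ∃ i j, i ≤ n ∧ j ≤ m ∧ A = p ^ i * q ^ j := by
  have hcop : Nat.Coprime (p ^ n) (q ^ m) :=
    Nat.Coprime.pow _ _ ((Nat.coprime_primes hp hq).mpr hpq)
  have h := (Nat.gcd_mul_gcd_eq_iff_dvd_mul_of_coprime hcop).mpr hA
  obtain ⟨i, hi, hgi⟩ := (Nat.dvd_prime_pow hp).mp (Nat.gcd_dvd_right A (p ^ n))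
  obtain ⟨j, hj, hgj⟩ := (Nat.dvd_prime_pow hq).mp (Nat.gcd_dvd_right A (q ^ m))
  exact ⟨i, j, hi, hj, by rw [← h, hgi, hgj]⟩

lemma prodpow (p q a1 a2 a3 b1 b2 b3 : ℕ) :
    (p ^ a1 * q ^ b1) * (p ^ a2 * q ^ b2) * (p ^ a3 * q ^ b3)
      = p ^ (a1 + a2 + a3) * q ^ (b1 + b2 + b3) := by
  rw [pow_add, pow_add, pow_add, pow_add]; ring

lemma T3_card {p q n m : ℕ} (hp : p.Prime) (hq : q.Prime) (hpq : p ≠ q) :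
    (T3 (p ^ n * q ^ m)).card = (A3 n).card * (A3 m).card := by
  have hN : p ^ n * q ^ m ≠ 0 :=
    Nat.mul_ne_zero (pow_ne_zero _ hp.pos.ne') (pow_ne_zero _ hq.pos.ne')
  rw [← card_product]
  apply (card_bij
    (fun e _ => ((p ^ e.1.1 * q ^ e.2.1, p ^ e.1.2.1 * q ^ e.2.2.1, p ^ e.1.2.2 * q ^ e.2.2.2)
      : ℕ × ℕ × ℕ)) ?_ ?_ ?_).symm
  · rintro ⟨⟨a1, a2, a3⟩, b1, b2, b3⟩ he
    simp only [mem_product, mem_A3] at he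
    rw [mem_T3 hN]
    show (p ^ a1 * q ^ b1) * (p ^ a2 * q ^ b2) * (p ^ a3 * q ^ b3) = _
    rw [prodpow, he.1, he.2]
  · rintro ⟨⟨a1, a2, a3⟩, b1, b2, b3⟩ h1 ⟨⟨c1, c2, c3⟩, d1, d2, d3⟩ h2 he
    simp only [Prod.mk.injEq] at he ⊢
    obtain ⟨e1, e2, e3⟩ := he
    obtain ⟨u1, v1⟩ := ppow_inj hp hq hpq e1
    obtain ⟨u2, v2⟩ := ppow_inj hp hq hpq e2
    obtain ⟨u3, v3⟩ := ppow_inj hp hq hpq e3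
    exact ⟨⟨u1, u2, u3⟩, v1, v2, v3⟩
  · rintro ⟨A, B, C⟩ ht
    have htm := (mem_T3 hN).mp ht
    have hA : A ∣ p ^ n * q ^ m := ⟨B * C, by rw [← htm]; ring⟩
    have hB : B ∣ p ^ n * q ^ m := ⟨A * C, by rw [← htm]; ring⟩
    have hC : C ∣ p ^ n * q ^ m := ⟨A * B, by rw [← htm]; ring⟩
    obtain ⟨i1, j1, _, _, rfl⟩ := dvd_shape hp hq hpq hA
    obtain ⟨i2, j2, _, _, rfl⟩ := dvd_shape hp hq hpq hB
    obtain ⟨i3, j3, _, _, rfl⟩ := dvd_shape hp hq hpq hC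
    rw [prodpow] at htm
    obtain ⟨hsum1, hsum2⟩ := ppow_inj hp hq hpq htm
    refine ⟨((i1, i2, i3), (j1, j2, j3)), ?_, rfl⟩
    simp only [mem_product, mem_A3]
    exact ⟨hsum1, hsum2⟩

def sort3 (t : ℕ × ℕ × ℕ) : ℕ × ℕ × ℕ :=
  (min t.1 (min t.2.1 t.2.2),
   t.1 + t.2.1 + t.2.2 - min t.1 (min t.2.1 t.2.2) - max t.1 (max t.2.1 t.2.2),
   max t.1 (max t.2.1 t.2.2))

lemma sort3_perm (x y z : ℕ) :
    sort3 (x, y, z) = (x, y, z) ∨ sort3 (x, y, z) = (x, z, y) ∨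
    sort3 (x, y, z) = (y, x, z) ∨ sort3 (x, y, z) = (y, z, x) ∨
    sort3 (x, y, z) = (z, x, y) ∨ sort3 (x, y, z) = (z, y, x) := by
  simp only [sort3, Prod.mk.injEq]
  omega

lemma sort3_sorted (x y z : ℕ) : (sort3 (x,y,z)).1 ≤ (sort3 (x,y,z)).2.1 ∧
    (sort3 (x,y,z)).2.1 ≤ (sort3 (x,y,z)).2.2 := by
  simp only [sort3]; omega

lemma sort3_eq_self {x y z : ℕ} (h1 : x ≤ y) (h2 : y ≤ z) : sort3 (x,y,z) = (x,y,z) := by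
  simp only [sort3, Prod.mk.injEq]; omega

lemma sort3_comm1 (x y z : ℕ) : sort3 (y, x, z) = sort3 (x, y, z) := by
  simp only [sort3, Prod.mk.injEq]; omega

lemma sort3_comm2 (x y z : ℕ) : sort3 (x, z, y) = sort3 (x, y, z) := by
  simp only [sort3, Prod.mk.injEq]; omega

lemma sort3_pair (x y : ℕ) : sort3 (x, x, y) = (min x y, x, max x y) := by
  simp only [sort3, Prod.mk.injEq]; omega

lemma card6 {A B C : ℕ} (hd1 : A ≠ B) (hd2 : B ≠ C) (hd3 : A ≠ C) :
    ({(A,B,C),(A,C,B),(B,A,C),(B,C,A),(C,A,B),(C,B,A)} : Finset (ℕ×ℕ×ℕ)).card = 6 := by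
  rw [card_insert_of_notMem (by simp [Prod.ext_iff]; omega),
      card_insert_of_notMem (by simp [Prod.ext_iff]; omega),
      card_insert_of_notMem (by simp [Prod.ext_iff]; omega),
      card_insert_of_notMem (by simp [Prod.ext_iff]; omega),
      card_insert_of_notMem (by simp [Prod.ext_iff]; omega),
      card_singleton]

lemma card3a {A C : ℕ} (h : A ≠ C) :
    ({(A,A,C),(A,C,A),(A,A,C),(A,C,A),(C,A,A),(C,A,A)} : Finset (ℕ×ℕ×ℕ)).card = 3 := by
  have : ({(A,A,C),(A,C,A),(A,A,C),(A,C,A),(C,A,A),(C,A,A)} : Finset (ℕ×ℕ×ℕ))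
      = {(A,A,C),(A,C,A),(C,A,A)} := by
    ext t; simp [Prod.ext_iff]
  rw [this,
      card_insert_of_notMem (by simp [Prod.ext_iff]; omega),
      card_insert_of_notMem (by simp [Prod.ext_iff]; omega),
      card_singleton]

lemma card3b {A B : ℕ} (h : A ≠ B) :
    ({(A,B,B),(A,B,B),(B,A,B),(B,B,A),(B,A,B),(B,B,A)} : Finset (ℕ×ℕ×ℕ)).card = 3 := by
  have : ({(A,B,B),(A,B,B),(B,A,B),(B,B,A),(B,A,B),(B,B,A)} : Finset (ℕ×ℕ×ℕ))
      = {(A,B,B),(B,A,B),(B,B,A)} := by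
    ext t; simp [Prod.ext_iff]
  rw [this,
      card_insert_of_notMem (by simp [Prod.ext_iff]; omega),
      card_insert_of_notMem (by simp [Prod.ext_iff]; omega),
      card_singleton]

def S3 (N : ℕ) : Finset (ℕ × ℕ × ℕ) :=
  (T3 N).filter (fun t => t.1 ≤ t.2.1 ∧ t.2.1 ≤ t.2.2)

lemma mem_S3 {N : ℕ} {t : ℕ × ℕ × ℕ} :
    t ∈ S3 N ↔ t ∈ T3 N ∧ t.1 ≤ t.2.1 ∧ t.2.1 ≤ t.2.2 := mem_filter

lemma fiber_eq {N A B C : ℕ} (hN : N ≠ 0) (hs : (A, B, C) ∈ S3 N) :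
    (T3 N).filter (fun t => sort3 t = (A, B, C))
      = {(A,B,C),(A,C,B),(B,A,C),(B,C,A),(C,A,B),(C,B,A)} := by
  obtain ⟨hsT, hAB, hBC⟩ := mem_S3.mp hs
  replace hAB : A ≤ B := hAB
  replace hBC : B ≤ C := hBC
  have hprod : A * B * C = N := (mem_T3 hN).mp hsT
  ext ⟨x, y, z⟩
  simp only [mem_filter, mem_insert, mem_singleton]
  constructor
  · rintro ⟨hx, hsort⟩
    rcases sort3_perm x y z with h | h | h | h | h | h <;>
      (rw [h] at hsort; simp only [Prod.mk.injEq] at hsort ⊢; omega)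
  · rintro (h | h | h | h | h | h) <;> simp only [Prod.mk.injEq] at h <;>
      obtain ⟨rfl, rfl, rfl⟩ := h <;>
      exact ⟨(mem_T3 hN).mpr (by rw [← hprod]; try ring),
        by simp only [sort3, Prod.mk.injEq]; omega⟩

lemma sort3_mem_S3 {N : ℕ} (hN : N ≠ 0) {t : ℕ × ℕ × ℕ} (ht : t ∈ T3 N) :
    sort3 t ∈ S3 N := by
  obtain ⟨x, y, z⟩ := t
  have hprod : x * y * z = N := (mem_T3 hN).mp ht
  rw [mem_S3]
  refine ⟨?_, sort3_sorted x y z⟩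
  rcases sort3_perm x y z with h | h | h | h | h | h <;>
    (rw [h, mem_T3 hN, ← hprod]; try ring)

lemma noCube {p q n m A : ℕ} (hp : p.Prime) (hq : q.Prime) (hpq : p ≠ q)
    (h3 : n % 3 ≠ 0) (h : A * A * A = p ^ n * q ^ m) : False := by
  have hA : A ∣ p ^ n * q ^ m := ⟨A * A, by rw [← h]; ring⟩
  obtain ⟨i, j, _, _, rfl⟩ := dvd_shape hp hq hpq hA
  rw [prodpow] at h
  obtain ⟨h1, h2⟩ := ppow_inj hp hq hpq h
  omega

lemma key_count {p q n m : ℕ} (hp : p.Prime) (hq : q.Prime) (hpq : p ≠ q)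
    (h3 : n % 3 ≠ 0) :
    (T3 (p ^ n * q ^ m)).card
      + 3 * ((S3 (p ^ n * q ^ m)).filter (fun s => s.1 = s.2.1 ∨ s.2.1 = s.2.2)).card
      = 6 * (S3 (p ^ n * q ^ m)).card := by
  set N := p ^ n * q ^ m with hNdef
  have hN : N ≠ 0 :=
    Nat.mul_ne_zero (pow_ne_zero _ hp.pos.ne') (pow_ne_zero _ hq.pos.ne')
  set P := (S3 N).filter (fun s => s.1 = s.2.1 ∨ s.2.1 = s.2.2) with hP
  set D := (S3 N).filter (fun s => ¬(s.1 = s.2.1 ∨ s.2.1 = s.2.2)) with hD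
  have hsum : (T3 N).card = ∑ s ∈ S3 N, ((T3 N).filter (fun t => sort3 t = s)).card :=
    card_eq_sum_card_fiberwise (fun t ht => sort3_mem_S3 hN ht)
  have hsplit : ∑ s ∈ P, ((T3 N).filter (fun t => sort3 t = s)).card
      + ∑ s ∈ D, ((T3 N).filter (fun t => sort3 t = s)).card
      = ∑ s ∈ S3 N, ((T3 N).filter (fun t => sort3 t = s)).card :=
    Finset.sum_filter_add_sum_filter_not _ _ _
  have hDcard : ∀ s ∈ D, ((T3 N).filter (fun t => sort3 t = s)).card = 6 := by
    rintro ⟨A, B, C⟩ hsD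
    rw [hD, mem_filter] at hsD
    obtain ⟨hsS, hne⟩ := hsD
    obtain ⟨_, hAB', hBC'⟩ := mem_S3.mp hsS
    have hAB : A ≤ B := hAB'
    have hBC : B ≤ C := hBC'
    replace hne : ¬(A = B ∨ B = C) := hne
    simp only [not_or] at hne
    rw [fiber_eq hN hsS]
    exact card6 hne.1 hne.2 (by omega)
  have hPcard : ∀ s ∈ P, ((T3 N).filter (fun t => sort3 t = s)).card = 3 := by
    rintro ⟨A, B, C⟩ hsP
    rw [hP, mem_filter] at hsP
    obtain ⟨hsS, hor⟩ := hsP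
    obtain ⟨hsT, hAB', hBC'⟩ := mem_S3.mp hsS
    have hAB : A ≤ B := hAB'
    have hBC : B ≤ C := hBC'
    replace hor : A = B ∨ B = C := hor
    have hprod : A * B * C = N := (mem_T3 hN).mp hsT
    have hnotall : ¬(A = B ∧ B = C) := by
      rintro ⟨rfl, rfl⟩
      exact noCube hp hq hpq h3 hprod
    rw [fiber_eq hN hsS]
    rcases hor with h | h
    · subst h
      have hAC : A ≠ C := by omega
      exact card3a hAC
    · subst h
      have hAB' : A ≠ B := by omega
      exact card3b hAB'
  have h6 : ∑ s ∈ D, ((T3 N).filter (fun t => sort3 t = s)).card = 6 * D.card := by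
    rw [Finset.sum_congr rfl hDcard, Finset.sum_const, smul_eq_mul, mul_comm]
  have h3' : ∑ s ∈ P, ((T3 N).filter (fun t => sort3 t = s)).card = 3 * P.card := by
    rw [Finset.sum_congr rfl hPcard, Finset.sum_const, smul_eq_mul, mul_comm]
  have hcard : P.card + D.card = (S3 N).card := Finset.card_filter_add_card_filter_not _
  omega

lemma Pset_card {p q : ℕ} (a b : ℕ) (hp : p.Prime) (hq : q.Prime) (hpq : p ≠ q) :
    ((S3 (p ^ (2*a+1) * q ^ (2*b+1))).filter
      (fun s => s.1 = s.2.1 ∨ s.2.1 = s.2.2)).card = (a+1) * (b+1) := by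
  set n := 2*a+1 with hn
  set m := 2*b+1 with hm
  set N := p ^ n * q ^ m with hNdef
  have hN : N ≠ 0 :=
    Nat.mul_ne_zero (pow_ne_zero _ hp.pos.ne') (pow_ne_zero _ hq.pos.ne')
  rw [← card_range (a+1), ← card_range (b+1), ← card_product]
  apply (card_bij (fun e _ =>
    sort3 (p ^ e.1 * q ^ e.2, p ^ e.1 * q ^ e.2, p ^ (n - 2*e.1) * q ^ (m - 2*e.2)))
    ?_ ?_ ?_).symm
  · rintro ⟨i, j⟩ he
    simp only [mem_product, mem_range] at he
    show sort3 (p ^ i * q ^ j, p ^ i * q ^ j, p ^ (n - 2*i) * q ^ (m - 2*j)) ∈ _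
    set x := p ^ i * q ^ j with hx
    set y := p ^ (n - 2*i) * q ^ (m - 2*j) with hy
    have hxy : x * x * y = N := by
      have e1 : i + i + (n - 2*i) = n := by omega
      have e2 : j + j + (m - 2*j) = m := by omega
      rw [hx, hy, hNdef, prodpow, e1, e2]
    rw [mem_filter, mem_S3, sort3_pair]
    refine ⟨⟨(mem_T3 hN).mpr ?_, ?_, ?_⟩, ?_⟩
    · show min x y * x * max x y = N
      rcases le_total x y with h | h
      · rw [min_eq_left h, max_eq_right h]; exact hxy
      · rw [min_eq_right h, max_eq_left h]; rw [← hxy]; ring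
    · exact min_le_left x y
    · exact le_max_left x y
    · show min x y = x ∨ x = max x y
      omega
  · rintro ⟨i, j⟩ h1 ⟨k, l⟩ h2 he
    replace he : sort3 (p ^ i * q ^ j, p ^ i * q ^ j, p ^ (n - 2*i) * q ^ (m - 2*j))
        = sort3 (p ^ k * q ^ l, p ^ k * q ^ l, p ^ (n - 2*k) * q ^ (m - 2*l)) := he
    rw [sort3_pair, sort3_pair] at he
    have h2nd : p ^ i * q ^ j = p ^ k * q ^ l := congrArg (fun t => t.2.1) he
    obtain ⟨rfl, rfl⟩ := ppow_inj hp hq hpq h2nd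
    rfl
  · rintro ⟨A, B, C⟩ hs
    rw [mem_filter] at hs
    obtain ⟨hsS, hor⟩ := hs
    replace hor : A = B ∨ B = C := hor
    obtain ⟨hsT, hAB', hBC'⟩ := mem_S3.mp hsS
    have hAB : A ≤ B := hAB'
    have hBC : B ≤ C := hBC'
    have hprod : A * B * C = N := (mem_T3 hN).mp hsT
    have hBdvd : B ∣ N := ⟨A * C, by rw [← hprod]; ring⟩
    obtain ⟨i, j, hi, hj, hB⟩ := dvd_shape hp hq hpq hBdvd
    rcases hor with h | h
    · -- A = B, other element is C
      have hCdvd : C ∣ N := ⟨A * B, by rw [← hprod]; ring⟩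
      obtain ⟨k, l, hk, hl, hC⟩ := dvd_shape hp hq hpq hCdvd
      have hexp : (i + i + k = n) ∧ (j + j + l = m) := by
        apply ppow_inj hp hq hpq
        rw [← prodpow, ← hB, ← hC, ← hNdef, ← hprod, h]
      refine ⟨(i, j), ?_, ?_⟩
      · simp only [mem_product, mem_range]; omega
      · show sort3 (p ^ i * q ^ j, p ^ i * q ^ j, p ^ (n - 2*i) * q ^ (m - 2*j)) = (A, B, C)
        have e1 : n - 2*i = k := by omega
        have e2 : m - 2*j = l := by omega
        rw [e1, e2, ← hB, ← hC, sort3_pair, h, min_eq_left hBC, max_eq_right hBC]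
    · -- B = C, other element is A
      have hAdvd : A ∣ N := ⟨B * C, by rw [← hprod]; ring⟩
      obtain ⟨k, l, hk, hl, hA⟩ := dvd_shape hp hq hpq hAdvd
      have hexp : (i + i + k = n) ∧ (j + j + l = m) := by
        apply ppow_inj hp hq hpq
        rw [← prodpow, ← hB, ← hA, ← hNdef, ← hprod, ← h]
        ring
      refine ⟨(i, j), ?_, ?_⟩
      · simp only [mem_product, mem_range]; omega
      · show sort3 (p ^ i * q ^ j, p ^ i * q ^ j, p ^ (n - 2*i) * q ^ (m - 2*j)) = (A, B, C)
        have e1 : n - 2*i = k := by omega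
        have e2 : m - 2*j = l := by omega
        rw [e1, e2, ← hB, ← hA, sort3_pair, min_eq_right hAB, max_eq_left hAB, ← h]

/-- Number of cuboids with integer edge lengths and volume `N`. -/
noncomputable def cuboidCount (N : ℕ) : ℕ :=
  Set.ncard {t : ℕ × ℕ × ℕ | 0 < t.1 ∧ t.1 ≤ t.2.1 ∧ t.2.1 ≤ t.2.2 ∧ t.1 * t.2.1 * t.2.2 = N}

theorem cuboid_count_two_primes (p q n m : ℕ) (hp : p.Prime) (hq : q.Prime)
    (hpq : p ≠ q) (hn : 0 < n) (hm : 0 < m)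
    (hnmod : n % 6 = 1 ∨ n % 6 = 5) (hmmod : m % 6 = 1 ∨ m % 6 = 3 ∨ m % 6 = 5) :
    (cuboidCount (p ^ n * q ^ m) : ℚ) = ((n : ℚ) + 1) * ((m : ℚ) + 1) * ((n : ℚ) * m + 2 * n + 2 * m + 7) / 24 := by
  have hN : p ^ n * q ^ m ≠ 0 :=
    Nat.mul_ne_zero (pow_ne_zero _ hp.pos.ne') (pow_ne_zero _ hq.pos.ne')
  have hcc : cuboidCount (p ^ n * q ^ m) = (S3 (p ^ n * q ^ m)).card := by
    unfold cuboidCount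
    rw [← Set.ncard_coe_finset]
    congr 1
    ext ⟨x, y, z⟩
    simp only [Set.mem_setOf_eq, Finset.mem_coe]
    rw [mem_S3, mem_T3 hN]
    constructor
    · rintro ⟨hx, h1, h2, h3⟩
      exact ⟨h3, h1, h2⟩
    · rintro ⟨h3, h1, h2⟩
      refine ⟨?_, h1, h2, h3⟩
      rcases Nat.eq_zero_or_pos x with rfl | hx
      · exact absurd (by rw [← h3]; ring) hN
      · exact hx
  have h3n : n % 3 ≠ 0 := by omega
  obtain ⟨a, rfl⟩ : ∃ a, n = 2*a+1 := ⟨n / 2, by omega⟩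
  obtain ⟨b, rfl⟩ : ∃ b, m = 2*b+1 := ⟨m / 2, by omega⟩
  have hkey := key_count hp hq hpq h3n (m := 2*b+1)
  rw [Pset_card a b hp hq hpq] at hkey
  have hT4 : (T3 (p ^ (2*a+1) * q ^ (2*b+1))).card * 4
      = (2*a+1+1) * (2*a+1+2) * ((2*b+1+1) * (2*b+1+2)) := by
    calc (T3 (p ^ (2*a+1) * q ^ (2*b+1))).card * 4
        = ((A3 (2*a+1)).card * 2) * ((A3 (2*b+1)).card * 2) := by
          rw [T3_card hp hq hpq]; ring
      _ = (2*a+1+1) * (2*a+1+2) * ((2*b+1+1) * (2*b+1+2)) := by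
          rw [A3_card, A3_card]
  rw [hcc]
  have e1 : ((T3 (p ^ (2*a+1) * q ^ (2*b+1))).card : ℚ) + 3 * ((a+1) * (b+1))
      = 6 * ((S3 (p ^ (2*a+1) * q ^ (2*b+1))).card : ℚ) := by exact_mod_cast hkey
  have e2 : ((T3 (p ^ (2*a+1) * q ^ (2*b+1))).card : ℚ) * 4
      = (2*(a:ℚ)+1+1) * (2*a+1+2) * ((2*(b:ℚ)+1+1) * (2*b+1+2)) := by exact_mod_cast hT4
  rw [eq_div_iff (by norm_num : (24:ℚ) ≠ 0)]
  push_cast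
  linear_combination (-4 : ℚ) * e1 + e2
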